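/- Suppose |K| = q², α = α⁻¹ (i.e. α(x,y)² = 1 for all x,y ∈ G), and let 0 ≠ C = Re ≤ R = K[G,Θ,α] with e² = e. Write f for the adjoint of e^{(q)}. Then C is Hermitian self-dual, i.e. C = C^{⊥_h}, if and only if e·f = 0 and 1̄ − f = (1̄ − f)·e. -/
import Mathlib


open Finset

set_option linter.unusedSectionVars false
set_option linter.unusedVariables false
set_option maxHeartbeats 4000000

variable {K : Type*} {G : Type*}

/-- Multiplication of the twisted skew group ring `K[G,Θ,α]`:
`(Σ_g a_g ḡ)·(Σ_h b_h h̄) = Σ_{g,h} a_g·Θ(g)(b_h)·α(g,h)·(gh)‾`. -/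
def tsMul [Field K] [Group G] [Fintype G] [DecidableEq G]
    (Θ : G →* RingAut K) (α : G → G → Kˣ) (a b : G → K) : G → K :=
  fun x => ∑ p : G × G, if p.1 * p.2 = x then a p.1 * Θ p.1 (b p.2) * (α p.1 p.2 : K) else 0

/-- The identity element `1̄` of the twisted skew group ring. -/
def tsOne [Field K] [Group G] [DecidableEq G] : (G → K) := fun x => if x = 1 then 1 else 0

/-- The adjoint map `a ↦ â = Σ_g Θ(g⁻¹)(a_g)·α(g,g⁻¹)·(g⁻¹)‾`. -/
def tsAdj [Field K] [Group G] (Θ : G →* RingAut K) (α : G → G → Kˣ) (a : G → K) : G → K :=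
  fun x => Θ x (a x⁻¹) * (α x⁻¹ x : K)

/-- Auxiliary: the conjugate-transpose `b ↦ (b^{(q)})^` operator. -/
def tsS [Field K] [Group G] (q : ℕ) (Θ : G →* RingAut K) (α : G → G → Kˣ) (b : G → K) :
    G → K :=
  tsAdj Θ α (fun g => b g ^ q)

lemma pm_solver [Field K] (u1 u2 u3 u4 u5 u6 u7 u8 : K)
    (s1 : u1 = 1 ∨ u1 = -1) (s2 : u2 = 1 ∨ u2 = -1) (s3 : u3 = 1 ∨ u3 = -1)
    (s4 : u4 = 1 ∨ u4 = -1) (s5 : u5 = 1 ∨ u5 = -1) (s6 : u6 = 1 ∨ u6 = -1)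
    (s7 : u7 = 1 ∨ u7 = -1) (s8 : u8 = 1 ∨ u8 = -1)
    (e1 : u7 = u6 * u5) (e2 : u3 * u6 = u7 * u8) (e3 : u4 * u8 = u2 * u1) :
    u1 * u2 = u3 * u4 * u5 := by
  rcases s1 with rfl|rfl <;> rcases s2 with rfl|rfl <;> rcases s3 with rfl|rfl <;>
    rcases s4 with rfl|rfl <;> rcases s5 with rfl|rfl <;> rcases s6 with rfl|rfl <;>
    rcases s7 with rfl|rfl <;> rcases s8 with rfl|rfl <;>
    first
      | ring1
      | linear_combination e1
      | linear_combination -e1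
      | linear_combination e2
      | linear_combination -e2
      | linear_combination e3
      | linear_combination -e3

lemma pm_of_sq [Field K] (u : K) (hu : u ^ 2 = 1) : u = 1 ∨ u = -1 := by
  have h : (u - 1) * (u + 1) = 0 := by linear_combination hu
  rcases mul_eq_zero.mp h with h | h
  · exact Or.inl (sub_eq_zero.mp h)
  · exact Or.inr (eq_neg_of_add_eq_zero_left h)

section Aux

variable [Field K] [Group G] [Fintype G] [DecidableEq G]
variable (Θ : G →* RingAut K) (α : G → G → Kˣ)

lemma theta_comp (g h : G) (z : K) : Θ g (Θ h z) = Θ (g * h) z := by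
  rw [map_mul Θ g h]; rfl

lemma theta_cancel (g : G) (z : K) : Θ g (Θ g⁻¹ z) = z := by
  rw [theta_comp, mul_inv_cancel, map_one]; rfl

lemma tsMul_apply (a b : G → K) (x : G) :
    tsMul Θ α a b x = ∑ g : G, a g * Θ g (b (g⁻¹ * x)) * (α g (g⁻¹ * x) : K) := by
  unfold tsMul
  rw [Fintype.sum_prod_type]
  refine Finset.sum_congr rfl fun g _ => ?_
  rw [Finset.sum_eq_single (g⁻¹ * x)]
  · rw [if_pos (mul_inv_cancel_left g x)]
  · intro h _ hne
    rw [if_neg]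
    intro hc
    exact hne (by rw [← hc]; group)
  · intro h; exact absurd (Finset.mem_univ _) h

lemma tsS_apply (q : ℕ) (b : G → K) (x : G) :
    tsS q Θ α b x = (Θ x (b x⁻¹)) ^ q * (α x⁻¹ x : K) := by
  simp [tsS, tsAdj, map_pow]

lemma tsMul_sub_right (a b c : G → K) :
    tsMul Θ α a (b - c) = tsMul Θ α a b - tsMul Θ α a c := by
  funext x
  simp only [tsMul, Pi.sub_apply, map_sub]
  rw [← Finset.sum_sub_distrib]
  refine Finset.sum_congr rfl fun p _ => by split_ifs <;> ring

lemma tsMul_zero_left (b : G → K) : tsMul Θ α 0 b = 0 := by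
  funext x; simp [tsMul]

lemma tsMul_zero_right (a : G → K) : tsMul Θ α a 0 = 0 := by
  funext x; simp [tsMul]

lemma tsMul_one (hnorm : ∀ g : G, α g 1 = 1 ∧ α 1 g = 1) (a : G → K) :
    tsMul Θ α a tsOne = a := by
  funext x
  rw [tsMul_apply]
  rw [Finset.sum_eq_single x]
  · simp [tsOne, (hnorm x).1]
  · intro g _ hne
    have : ¬ (g⁻¹ * x = 1) := fun hc => hne (inv_mul_eq_one.mp hc)
    simp [tsOne, this]
  · intro h; exact absurd (Finset.mem_univ _) h

lemma one_tsMul (hnorm : ∀ g : G, α g 1 = 1 ∧ α 1 g = 1) (a : G → K) :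
    tsMul Θ α tsOne a = a := by
  funext x
  rw [tsMul_apply]
  rw [Finset.sum_eq_single 1]
  · rw [show (tsOne : G → K) 1 = 1 from if_pos rfl, one_mul, inv_one, one_mul,
      (hnorm x).2, Units.val_one, mul_one, map_one Θ]
    rfl
  · intro g _ hne
    simp [tsOne, hne]
  · intro h; exact absurd (Finset.mem_univ _) h

lemma alpha_inv (hnorm : ∀ g : G, α g 1 = 1 ∧ α 1 g = 1)
    (hcoc : ∀ g₁ g₂ g₃ : G, α g₁ (g₂ * g₃) * α g₂ g₃ = α (g₁ * g₂) g₃ * α g₁ g₂)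
    (x : G) : α x⁻¹ x = α x x⁻¹ := by
  have h := hcoc x x⁻¹ x
  simpa [inv_mul_cancel, mul_inv_cancel, (hnorm x).1, (hnorm x).2] using h

lemma tsMul_assoc
    (hcoc : ∀ g₁ g₂ g₃ : G, α g₁ (g₂ * g₃) * α g₂ g₃ = α (g₁ * g₂) g₃ * α g₁ g₂)
    (hstab : ∀ g x y : G, Θ g ((α x y : K)) = (α x y : K))
    (a b c : G → K) :
    tsMul Θ α (tsMul Θ α a b) c = tsMul Θ α a (tsMul Θ α b c) := by
  funext x
  simp only [tsMul_apply]
  simp only [Finset.sum_mul, map_sum, Finset.mul_sum]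
  rw [Finset.sum_comm]
  refine Finset.sum_congr rfl fun g _ => ?_
  refine Fintype.sum_equiv (Equiv.mulLeft g).symm _ _ fun k => ?_
  have hk : ((Equiv.mulLeft g).symm k : G) = g⁻¹ * k := rfl
  rw [hk]
  have h1 : g * (g⁻¹ * k) = k := mul_inv_cancel_left g k
  have h2 : Θ g (Θ (g⁻¹ * k) (c ((g⁻¹*k)⁻¹ * (g⁻¹ * x)))) = Θ k (c (k⁻¹ * x)) := by
    rw [theta_comp, h1]
    congr 1
    group
  have h3 : ((g⁻¹*k)⁻¹ * (g⁻¹ * x)) = k⁻¹ * x := by group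
  have hc := congrArg (Units.val) (hcoc g (g⁻¹ * k) (k⁻¹ * x))
  push_cast at hc
  rw [map_mul (Θ g), map_mul (Θ g), hstab, h2, h3]
  have h4 : g * (g⁻¹ * k) = k := h1
  have h5 : (g⁻¹ * k) * (k⁻¹ * x) = g⁻¹ * x := by group
  rw [h4, h5] at hc
  linear_combination (-(a g * Θ g (b (g⁻¹ * k)) * Θ k (c (k⁻¹ * x)))) * hc

lemma key_alpha
    (hnorm : ∀ g : G, α g 1 = 1 ∧ α 1 g = 1)
    (hcoc : ∀ g₁ g₂ g₃ : G, α g₁ (g₂ * g₃) * α g₂ g₃ = α (g₁ * g₂) g₃ * α g₁ g₂)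
    (hα2 : ∀ x y : G, (α x y : K) ^ 2 = 1)
    (x g : G) :
    (α g (g⁻¹ * x⁻¹) : K) * α x⁻¹ x =
      (α (g⁻¹ * x⁻¹) (x * g) : K) * α g g⁻¹ * α (x * g) g⁻¹ := by
  have e1u := hcoc (x*g) g⁻¹ g
  rw [inv_mul_cancel, (hnorm _).1, one_mul, mul_inv_cancel_right] at e1u
  have e2u := hcoc (g⁻¹*x⁻¹) x g
  rw [show (g⁻¹*x⁻¹)*x = g⁻¹ by group] at e2u
  have e3u := hcoc g (g⁻¹*x⁻¹) x
  rw [show (g⁻¹*x⁻¹)*x = g⁻¹ by group, show g*(g⁻¹*x⁻¹) = x⁻¹ by group] at e3u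
  have e1 := congrArg (Units.val) e1u
  have e2 := congrArg (Units.val) e2u
  have e3 := congrArg (Units.val) e3u
  push_cast at e1 e2 e3
  exact pm_solver _ _ _ _ _ _ _ _
    (pm_of_sq _ (hα2 _ _)) (pm_of_sq _ (hα2 _ _)) (pm_of_sq _ (hα2 _ _))
    (pm_of_sq _ (hα2 _ _)) (pm_of_sq _ (hα2 _ _)) (pm_of_sq _ (hα2 _ _))
    (pm_of_sq _ (hα2 _ _)) (pm_of_sq _ (hα2 _ _)) e1 e2 e3

lemma tsS_mul
    (hnorm : ∀ g : G, α g 1 = 1 ∧ α 1 g = 1)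
    (hcoc : ∀ g₁ g₂ g₃ : G, α g₁ (g₂ * g₃) * α g₂ g₃ = α (g₁ * g₂) g₃ * α g₁ g₂)
    (hstab : ∀ g x y : G, Θ g ((α x y : K)) = (α x y : K))
    (hα2 : ∀ x y : G, (α x y : K) ^ 2 = 1)
    (q : ℕ) (φ : K →+* K) (hφ : ∀ z : K, φ z = z ^ q)
    (hsqα : ∀ x y : G, (α x y : K) ^ q = α x y)
    (a b : G → K) :
    tsS q Θ α (tsMul Θ α a b) = tsMul Θ α (tsS q Θ α b) (tsS q Θ α a) := by
  funext x
  rw [tsS_apply, tsMul_apply, tsMul_apply]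
  rw [map_sum, ← hφ, map_sum φ, Finset.sum_mul]
  refine Fintype.sum_equiv (Equiv.mulLeft x) _ _ fun g => ?_
  have hg : (Equiv.mulLeft x g : G) = x * g := rfl
  rw [hg]
  have h1 : (x * g)⁻¹ * x = g⁻¹ := by group
  have h2 : (x * g)⁻¹ = g⁻¹ * x⁻¹ := by rw [mul_inv_rev]
  rw [h1, tsS_apply, tsS_apply, inv_inv, h2]
  rw [map_mul (Θ (x*g)), map_pow (Θ (x*g)), theta_comp, mul_inv_cancel_right, hstab]
  rw [map_mul (Θ x), map_mul (Θ x), theta_comp, hstab, map_mul φ, map_mul φ, hφ, hφ, hφ, hsqα]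
  have hk := key_alpha α hnorm hcoc hα2 x g
  linear_combination ((Θ x (a g))^q * (Θ (x*g) (b (g⁻¹ * x⁻¹)))^q) * hk

lemma tsS_S
    (hnorm : ∀ g : G, α g 1 = 1 ∧ α 1 g = 1)
    (hcoc : ∀ g₁ g₂ g₃ : G, α g₁ (g₂ * g₃) * α g₂ g₃ = α (g₁ * g₂) g₃ * α g₁ g₂)
    (hstab : ∀ g x y : G, Θ g ((α x y : K)) = (α x y : K))
    (hα2 : ∀ x y : G, (α x y : K) ^ 2 = 1)
    (q : ℕ) (hqq : ∀ z : K, (z ^ q) ^ q = z)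
    (hsqα : ∀ x y : G, (α x y : K) ^ q = α x y)
    (b : G → K) :
    tsS q Θ α (tsS q Θ α b) = b := by
  funext x
  rw [tsS_apply, tsS_apply, inv_inv]
  rw [map_mul (Θ x), map_pow (Θ x), theta_cancel, hstab]
  rw [mul_pow, hqq, hsqα]
  have h := congrArg (Units.val) (alpha_inv α hnorm hcoc x)
  push_cast at h
  rw [h]
  have h2 := hα2 x x⁻¹
  rw [mul_assoc, ← sq, h2, mul_one]

lemma tsS_one
    (hnorm : ∀ g : G, α g 1 = 1 ∧ α 1 g = 1)
    (q : ℕ) (hq0 : q ≠ 0) :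
    tsS q Θ α (tsOne : G → K) = tsOne := by
  funext x
  rw [tsS_apply]
  by_cases hx : x = 1
  · subst hx
    rw [show (tsOne : G → K) 1⁻¹ = 1 from by simp [tsOne], map_one, one_pow,
      show (tsOne : G → K) 1 = 1 from if_pos rfl, inv_one, (hnorm 1).1, Units.val_one, mul_one]
  · have hx' : x⁻¹ ≠ 1 := fun hc => hx (by simpa using congrArg Inv.inv hc)
    rw [show (tsOne : G → K) x⁻¹ = 0 from if_neg hx', map_zero, zero_pow hq0, zero_mul]
    exact (if_neg hx).symm

lemma tsS_zero (q : ℕ) (hq0 : q ≠ 0) : tsS q Θ α (0 : G → K) = 0 := by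
  funext x
  rw [tsS_apply]
  simp [zero_pow hq0]

lemma tsS_sub (q : ℕ) (φ : K →+* K) (hφ : ∀ z : K, φ z = z ^ q) (a b : G → K) :
    tsS q Θ α (a - b) = tsS q Θ α a - tsS q Θ α b := by
  funext x
  simp only [tsS_apply, Pi.sub_apply, map_sub]
  rw [← hφ, ← hφ, ← hφ, map_sub φ, sub_mul]

lemma pair_eq
    (hα2 : ∀ x y : G, (α x y : K) ^ 2 = 1)
    (hstab : ∀ g x y : G, Θ g ((α x y : K)) = (α x y : K))
    (q : ℕ) (a b : G → K) :
    ∑ g : G, a g * b g ^ q = tsMul Θ α a (tsS q Θ α b) 1 := by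
  rw [tsMul_apply]
  refine Finset.sum_congr rfl fun g _ => ?_
  rw [mul_one, tsS_apply, inv_inv]
  rw [map_mul (Θ g), map_pow (Θ g), theta_cancel, hstab]
  have h2 := hα2 g g⁻¹
  have expand : a g * (b g ^ q * (α g g⁻¹ : K)) * (α g g⁻¹ : K)
      = a g * b g ^ q * ((α g g⁻¹ : K))^2 := by ring
  rw [expand, h2, mul_one]

lemma delta_zero (s : G → K) (h : ∀ r : G → K, tsMul Θ α r s 1 = 0) : s = 0 := by
  funext g
  have hg := h (fun y => if y = g⁻¹ then 1 else 0)
  rw [tsMul_apply] at hg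
  rw [Finset.sum_eq_single g⁻¹] at hg
  · rw [if_pos rfl, one_mul, mul_one, inv_inv] at hg
    rcases mul_eq_zero.mp hg with h0 | h0
    · have := congrArg (Θ g⁻¹).symm h0
      rw [RingEquiv.symm_apply_apply, map_zero] at this
      exact this
    · exact absurd h0 (Units.ne_zero _)
  · intro y _ hy
    rw [if_neg hy, zero_mul, zero_mul]
  · intro h'; exact absurd (Finset.mem_univ _) h'

end Aux

/-- Suppose `|K| = q²`, `α = α⁻¹`, and let `0 ≠ C = Re ≤ R` with
`e² = e`; write `f` for the adjoint of `e^{(q)}`.  Then `C` is Hermitian self-dual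
(`C = C^{⊥_h}`) iff `e·f = 0` and `1̄ − f = (1̄ − f)·e`. -/
theorem stmt18 [Field K] [Fintype K] [Group G] [Fintype G] [DecidableEq G]
    (q : ℕ) (hq : Fintype.card K = q ^ 2)
    (Θ : G →* RingAut K) (α : G → G → Kˣ)
    (hnorm : ∀ g : G, α g 1 = 1 ∧ α 1 g = 1)
    (hcoc : ∀ g₁ g₂ g₃ : G, α g₁ (g₂ * g₃) * α g₂ g₃ = α (g₁ * g₂) g₃ * α g₁ g₂)
    (hstab : ∀ g x y : G, Θ g ((α x y : K)) = (α x y : K))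
    (hα2 : ∀ x y : G, (α x y : K) ^ 2 = 1)
    (e : G → K) (he : tsMul Θ α e e = e) (he0 : e ≠ 0)
    (f : G → K) (hf : f = tsAdj Θ α (fun g => (e g) ^ q)) :
    ({x : G → K | ∃ r : G → K, x = tsMul Θ α r e} =
        {b : G → K | ∀ c : G → K, (∃ r : G → K, c = tsMul Θ α r e) →
          ∑ g : G, c g * (b g) ^ q = 0}) ↔
      (tsMul Θ α e f = 0 ∧ tsOne - f = tsMul Θ α (tsOne - f) e) := by
  -- q is a power of the characteristic
  have hq0 : q ≠ 0 := by
    rintro rfl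
    have hpos := Fintype.card_pos (α := K)
    rw [hq] at hpos
    simp at hpos
  obtain ⟨p, hp⟩ := CharP.exists K
  haveI := hp
  obtain ⟨n, hpp, hcard⟩ := FiniteField.card K p
  haveI : Fact p.Prime := ⟨hpp⟩
  have hqdvd : q ∣ p ^ (n : ℕ) := by
    rw [← hcard, hq]
    exact dvd_pow_self q two_ne_zero
  obtain ⟨m, hmn, hqm⟩ := (Nat.dvd_prime_pow hpp).mp hqdvd
  haveI : ExpChar K p := ExpChar.prime hpp
  set φ := iterateFrobenius K p m with hφdef
  have hφ : ∀ z : K, φ z = z ^ q := by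
    intro z
    rw [hqm]
    exact iterateFrobenius_def p m z
  have hqq : ∀ z : K, (z ^ q) ^ q = z := by
    intro z
    rw [← pow_mul, show q * q = Fintype.card K from by rw [hq, pow_two]]
    exact FiniteField.pow_card z
  have hsq : ∀ z : K, z ^ 2 = 1 → z ^ q = z := by
    intro z hz
    rcases pm_of_sq z hz with rfl | rfl
    · rw [one_pow]
    · rcases Nat.even_or_odd q with hqe | hqo
      · have hp2 : p = 2 := by
          have h2pm : 2 ∣ p ^ m := by rw [← hqm]; exact hqe.two_dvd
          have h2p := Nat.Prime.dvd_of_dvd_pow Nat.prime_two h2pm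
          exact ((Nat.prime_dvd_prime_iff_eq Nat.prime_two hpp).mp h2p).symm
        have hchar : ((2 : ℕ) : K) = 0 := by rw [← hp2]; exact CharP.cast_eq_zero K p
        have hneg : (-1 : K) = 1 := by push_cast at hchar; linear_combination -hchar
        rw [hneg, one_pow]
      · exact Odd.neg_one_pow hqo
  have hsqα : ∀ x y : G, (α x y : K) ^ q = α x y := fun x y => hsq _ (hα2 x y)
  have hf' : f = tsS q Θ α e := hf
  -- membership in the dual reduces to `e * S b = 0`
  have memD : ∀ b : G → K,
      (∀ c : G → K, (∃ r : G → K, c = tsMul Θ α r e) → ∑ g : G, c g * (b g) ^ q = 0) ↔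
        tsMul Θ α e (tsS q Θ α b) = 0 := by
    intro b
    constructor
    · intro h
      apply delta_zero Θ α
      intro r
      have h1 := h (tsMul Θ α r e) ⟨r, rfl⟩
      rw [pair_eq Θ α hα2 hstab q] at h1
      rw [← tsMul_assoc Θ α hcoc hstab]
      exact h1
    · rintro h c ⟨r, rfl⟩
      rw [pair_eq Θ α hα2 hstab q, tsMul_assoc Θ α hcoc hstab, h, tsMul_zero_right]
      rfl
  constructor
  · intro hCD
    rw [Set.ext_iff] at hCD
    have heC : ∃ r : G → K, e = tsMul Θ α r e := ⟨e, he.symm⟩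
    have heD := (hCD e).mp heC
    simp only [Set.mem_setOf_eq] at heD
    have hef : tsMul Θ α e f = 0 := by
      rw [hf']
      exact (memD e).mp heD
    refine ⟨hef, ?_⟩
    have h1fD : ∀ c : G → K, (∃ r : G → K, c = tsMul Θ α r e) →
        ∑ g : G, c g * ((tsOne - f : G → K) g) ^ q = 0 := by
      apply (memD (tsOne - f)).mpr
      rw [hf', tsS_sub Θ α q φ hφ, tsS_one Θ α hnorm q hq0,
        tsS_S Θ α hnorm hcoc hstab hα2 q hqq hsqα,
        tsMul_sub_right, tsMul_one Θ α hnorm, he, sub_self]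
    have h1fC := (hCD (tsOne - f)).mpr h1fD
    obtain ⟨r, hr⟩ := h1fC
    rw [hr, tsMul_assoc Θ α hcoc hstab, he, ← hr]
  · rintro ⟨h1, h2⟩
    ext b
    simp only [Set.mem_setOf_eq]
    constructor
    · rintro ⟨r, rfl⟩
      apply (memD _).mpr
      rw [tsS_mul Θ α hnorm hcoc hstab hα2 q φ hφ hsqα, ← hf',
        ← tsMul_assoc Θ α hcoc hstab, h1, tsMul_zero_left]
    · intro hbD
      have h0 : tsMul Θ α e (tsS q Θ α b) = 0 := (memD b).mp hbD
      have h3 := congrArg (tsS q Θ α) h0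
      rw [tsS_mul Θ α hnorm hcoc hstab hα2 q φ hφ hsqα,
        tsS_S Θ α hnorm hcoc hstab hα2 q hqq hsqα, ← hf',
        tsS_zero Θ α q hq0] at h3
      have hb : tsMul Θ α b (tsOne - f) = b := by
        rw [tsMul_sub_right, tsMul_one Θ α hnorm, h3, sub_zero]
      refine ⟨tsMul Θ α b (tsOne - f), ?_⟩
      rw [tsMul_assoc Θ α hcoc hstab, ← h2, hb]
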